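/- Let N_t, N_r, N ∈ ℕ be positive. Let P_1 = [I; 0] and P_2 = [0; I] in ℝ^{2N_t×N_t} (I the N_t×N_t identity) and P_3 = [[0, I],[−I, 0]] ∈ ℝ^{2N_r×2N_r} (I the N_r×N_r identity). For i = 1,…,N let G_i ∈ ℝ^{2N_r×2N_t}, s_i ∈ ℝ^{2N_r}, b_i ∈ ℝ^{2N_r}, λ_i ∈ ℝ^{2N_r}, and define Φ(W̄) := P_1 W̄ + P_2 W̄ P_3 for W̄ ∈ ℝ^{N_t×2N_r}. Suppose Σ := ∑_{i=1}^N ( s_i s_iᵀ + P_3 s_i s_iᵀ P_3ᵀ ) is positive definite. Then the function L(W̄) := ∑_{i=1}^N ‖Φ(W̄) s_i‖² + ∑_{i=1}^N λ_iᵀ ( b_i − G_i Φ(W̄) s_i ) has a unique global minimizer over ℝ^{N_t×2N_r}, given by W̄* = (1/2) · ( ∑_{i=1}^N P_1ᵀ G_iᵀ λ_i s_iᵀ + P_2ᵀ G_iᵀ λ_i s_iᵀ P_3ᵀ ) · Σ⁻¹. -/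

import Mathlib

open scoped BigOperators
open Matrix

/-- Unique minimizer of the Lagrangian of the block-level PM slot-invariant
problem: with `Φ(W̄) = P₁ W̄ + P₂ W̄ P₃` and `Σ = ∑ᵢ (sᵢ sᵢᵀ + P₃ sᵢ sᵢᵀ P₃ᵀ)`
positive definite, the function
`L(W̄) = ∑ᵢ ‖Φ(W̄) sᵢ‖² + ∑ᵢ λᵢᵀ(bᵢ − Gᵢ Φ(W̄) sᵢ)` has the unique global
minimizer `W̄* = (1/2)(∑ᵢ P₁ᵀGᵢᵀλᵢ sᵢᵀ + P₂ᵀGᵢᵀλᵢ (P₃ sᵢ)ᵀ) Σ⁻¹`. -/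
theorem stmt18 (Nt Nr N : ℕ) (hNt : 0 < Nt) (hNr : 0 < Nr) (hN : 0 < N)
    (P1 P2 : Matrix (Fin Nt ⊕ Fin Nt) (Fin Nt) ℝ)
    (hP1 : ∀ p j, P1 p j =
      Sum.elim (fun a => if a = j then (1 : ℝ) else 0) (fun _ => (0 : ℝ)) p)
    (hP2 : ∀ p j, P2 p j =
      Sum.elim (fun _ => (0 : ℝ)) (fun a => if a = j then (1 : ℝ) else 0) p)
    (P3 : Matrix (Fin Nr ⊕ Fin Nr) (Fin Nr ⊕ Fin Nr) ℝ)
    (hP3 : P3 = Matrix.fromBlocks 0 1 (-1) 0)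
    (G : Fin N → Matrix (Fin Nr ⊕ Fin Nr) (Fin Nt ⊕ Fin Nt) ℝ)
    (s b lam : Fin N → (Fin Nr ⊕ Fin Nr) → ℝ)
    (Phi : Matrix (Fin Nt) (Fin Nr ⊕ Fin Nr) ℝ →
      Matrix (Fin Nt ⊕ Fin Nt) (Fin Nr ⊕ Fin Nr) ℝ)
    (hPhi : ∀ W, Phi W = P1 * W + P2 * W * P3)
    (Sig : Matrix (Fin Nr ⊕ Fin Nr) (Fin Nr ⊕ Fin Nr) ℝ)
    (hSig : Sig = ∑ i, (Matrix.vecMulVec (s i) (s i) +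
        Matrix.vecMulVec (P3.mulVec (s i)) (P3.mulVec (s i))))
    (hposdef : Sig.PosDef)
    (L : Matrix (Fin Nt) (Fin Nr ⊕ Fin Nr) ℝ → ℝ)
    (hL : ∀ W, L W =
      (∑ i, ∑ p, ((Phi W).mulVec (s i) p) ^ 2) +
      ∑ i, ∑ k, lam i k * (b i k - (G i).mulVec ((Phi W).mulVec (s i)) k))
    (Wstar : Matrix (Fin Nt) (Fin Nr ⊕ Fin Nr) ℝ)
    (hWstar : Wstar = (1 / 2 : ℝ) •
      ((∑ i,
        (Matrix.vecMulVec ((P1.transpose * (G i).transpose).mulVec (lam i)) (s i) +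
         Matrix.vecMulVec ((P2.transpose * (G i).transpose).mulVec (lam i))
           (P3.mulVec (s i)))) * Sig⁻¹)) :
    (∀ V, L Wstar ≤ L V) ∧
    (∀ V, (∀ V', L V ≤ L V') → V = Wstar) := by
  classical
  set t : Fin N → (Fin Nr ⊕ Fin Nr) → ℝ := fun i => P3.mulVec (s i) with ht
  set u : Fin N → Fin Nt → ℝ := fun i => (P1.transpose * (G i).transpose).mulVec (lam i)
    with hu
  set v : Fin N → Fin Nt → ℝ := fun i => (P2.transpose * (G i).transpose).mulVec (lam i)
    with hv
  set C : Matrix (Fin Nt) (Fin Nr ⊕ Fin Nr) ℝ :=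
    ∑ i, (Matrix.vecMulVec (u i) (s i) + Matrix.vecMulVec (v i) (t i)) with hC
  -- Φ applied
  have hPhiapp : ∀ (W : Matrix (Fin Nt) (Fin Nr ⊕ Fin Nr) ℝ) (x : (Fin Nr ⊕ Fin Nr) → ℝ),
      (Phi W).mulVec x = Sum.elim (W.mulVec x) (W.mulVec (P3.mulVec x)) := by
    intro W x
    rw [hPhi]
    funext p
    cases p with
    | inl a =>
      simp [Matrix.add_mulVec, Matrix.mulVec, Matrix.mul_apply, hP1, hP2, dotProduct,
        Finset.sum_mul, Finset.mul_sum]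
    | inr a =>
      simp [Matrix.add_mulVec, Matrix.mulVec, Matrix.mul_apply, hP1, hP2, dotProduct,
        Finset.sum_mul, Finset.mul_sum]
  -- Σ applied
  have hSigapp : ∀ x : (Fin Nr ⊕ Fin Nr) → ℝ,
      Sig.mulVec x = ∑ i, ((s i ⬝ᵥ x) • s i + (t i ⬝ᵥ x) • t i) := by
    intro x
    funext k
    have hSig' : Sig = ∑ i, (Matrix.vecMulVec (s i) (s i) + Matrix.vecMulVec (t i) (t i)) :=
      hSig
    simp only [hSig', Matrix.mulVec, dotProduct, Matrix.sum_apply, Matrix.add_apply,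
      Matrix.vecMulVec_apply, Finset.sum_apply, Pi.add_apply, Pi.smul_apply, smul_eq_mul,
      Finset.sum_mul, add_mul]
    rw [Finset.sum_comm]
    refine Finset.sum_congr rfl fun i _ => ?_
    rw [← Finset.sum_add_distrib]
    exact Finset.sum_congr rfl fun j _ => by ring
  -- symmetry of Σ
  have hsymm : Sig.transpose = Sig := by
    have h := hposdef.isHermitian
    rwa [Matrix.IsHermitian, Matrix.conjTranspose_eq_transpose_of_trivial] at h
  have hsym : ∀ x y : (Fin Nr ⊕ Fin Nr) → ℝ,
      x ⬝ᵥ Sig.mulVec y = y ⬝ᵥ Sig.mulVec x := by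
    intro x y
    rw [dotProduct_mulVec, ← Matrix.mulVec_transpose, hsymm, dotProduct_comm]
  -- quadratic form value
  have hquad : ∀ x : (Fin Nr ⊕ Fin Nr) → ℝ,
      x ⬝ᵥ Sig.mulVec x = ∑ i, ((s i ⬝ᵥ x) ^ 2 + (t i ⬝ᵥ x) ^ 2) := by
    intro x
    rw [hSigapp]
    simp only [dotProduct, Finset.sum_apply, Pi.add_apply, Pi.smul_apply, smul_eq_mul,
      Finset.mul_sum]
    rw [Finset.sum_comm]
    refine Finset.sum_congr rfl fun i _ => ?_
    rw [pow_two, pow_two, Finset.sum_mul, Finset.sum_mul, ← Finset.sum_add_distrib]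
    refine Finset.sum_congr rfl fun j _ => by ring
  -- mulVec row value
  have hm : ∀ (W : Matrix (Fin Nt) (Fin Nr ⊕ Fin Nr) ℝ) (x : (Fin Nr ⊕ Fin Nr) → ℝ) a,
      (W.mulVec x) a = x ⬝ᵥ W a := fun W x a => dotProduct_comm (W a) x
  -- rows of C via Gᵀ·λ
  have huapp : ∀ i (a : Fin Nt), u i a = ((G i).transpose.mulVec (lam i)) (Sum.inl a) := by
    intro i a
    simp [hu, Matrix.mulVec, Matrix.mul_apply, dotProduct, Matrix.transpose_apply,
      hP1, Finset.sum_mul]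
  have hvapp : ∀ i (a : Fin Nt), v i a = ((G i).transpose.mulVec (lam i)) (Sum.inr a) := by
    intro i a
    simp [hv, Matrix.mulVec, Matrix.mul_apply, dotProduct, Matrix.transpose_apply,
      hP2, Finset.sum_mul]
  -- linear term per slot
  have hlin : ∀ i (W : Matrix (Fin Nt) (Fin Nr ⊕ Fin Nr) ℝ),
      (∑ k, lam i k * ((G i).mulVec ((Phi W).mulVec (s i))) k)
        = (u i ⬝ᵥ W.mulVec (s i)) + (v i ⬝ᵥ W.mulVec (t i)) := by
    intro i W
    have h1 : (∑ k, lam i k * ((G i).mulVec ((Phi W).mulVec (s i))) k)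
        = lam i ⬝ᵥ (G i).mulVec ((Phi W).mulVec (s i)) := rfl
    rw [h1, dotProduct_mulVec, ← Matrix.mulVec_transpose, hPhiapp]
    rw [show W.mulVec (P3.mulVec (s i)) = W.mulVec (t i) from rfl]
    simp only [dotProduct, Fintype.sum_sum_type, Sum.elim_inl, Sum.elim_inr]
    congr 1
    · exact Finset.sum_congr rfl fun a _ => by rw [huapp]
    · exact Finset.sum_congr rfl fun a _ => by rw [hvapp]
  -- the C-linear functional
  have hCapp : ∀ (W : Matrix (Fin Nt) (Fin Nr ⊕ Fin Nr) ℝ) a,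
      C a ⬝ᵥ W a = ∑ i, (u i a * (W.mulVec (s i)) a + v i a * (W.mulVec (t i)) a) := by
    intro W a
    simp only [hC, dotProduct, Matrix.sum_apply, Matrix.add_apply,
      Matrix.vecMulVec_apply, Finset.sum_apply, add_mul, Finset.sum_mul, Matrix.mulVec,
      Finset.mul_sum]
    rw [Finset.sum_comm]
    refine Finset.sum_congr rfl fun i _ => ?_
    rw [← Finset.sum_add_distrib]
    exact Finset.sum_congr rfl fun k _ => by ring
  have hCdot : ∀ (W : Matrix (Fin Nt) (Fin Nr ⊕ Fin Nr) ℝ),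
      (∑ a, C a ⬝ᵥ W a) = ∑ i, ((u i ⬝ᵥ W.mulVec (s i)) + (v i ⬝ᵥ W.mulVec (t i))) := by
    intro W
    rw [Finset.sum_congr rfl fun a _ => hCapp W a, Finset.sum_comm]
    refine Finset.sum_congr rfl fun i _ => ?_
    rw [Finset.sum_add_distrib]
    rfl
  -- canonical form of L
  have canon : ∀ (W : Matrix (Fin Nt) (Fin Nr ⊕ Fin Nr) ℝ),
      L W = (∑ a, W a ⬝ᵥ Sig.mulVec (W a)) - (∑ a, C a ⬝ᵥ W a)
        + ∑ i, ∑ k, lam i k * b i k := by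
    intro W
    rw [hL]
    have hq : (∑ i, ∑ p, ((Phi W).mulVec (s i) p) ^ 2)
        = ∑ a, W a ⬝ᵥ Sig.mulVec (W a) := by
      have h2 : ∀ i, (∑ p, ((Phi W).mulVec (s i) p) ^ 2)
          = ∑ a, ((s i ⬝ᵥ W a) ^ 2 + (t i ⬝ᵥ W a) ^ 2) := by
        intro i
        rw [hPhiapp]
        simp only [Fintype.sum_sum_type, Sum.elim_inl, Sum.elim_inr]
        rw [← Finset.sum_add_distrib]
        refine Finset.sum_congr rfl fun a _ => ?_
        rw [show W.mulVec (P3.mulVec (s i)) = W.mulVec (t i) from rfl, hm, hm]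
      rw [Finset.sum_congr rfl fun i _ => h2 i, Finset.sum_comm]
      exact Finset.sum_congr rfl fun a _ => (hquad (W a)).symm
    rw [hq]
    have hl2 : (∑ i, ∑ k, lam i k * (b i k - (G i).mulVec ((Phi W).mulVec (s i)) k))
        = (∑ i, ∑ k, lam i k * b i k) - ∑ a, C a ⬝ᵥ W a := by
      rw [hCdot]
      rw [← Finset.sum_sub_distrib]
      refine Finset.sum_congr rfl fun i _ => ?_
      rw [← hlin, ← Finset.sum_sub_distrib]
      exact Finset.sum_congr rfl fun k _ => by ring
    rw [hl2]
    ring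
  -- the stationarity identity
  have hdet : IsUnit Sig.det := hposdef.det_pos.ne'.isUnit
  have hWS : Wstar * Sig = (1 / 2 : ℝ) • C := by
    rw [hWstar, Matrix.smul_mul, Matrix.mul_assoc, Matrix.nonsing_inv_mul _ hdet,
      Matrix.mul_one]
  have hkj : ∀ k j, Sig k j = Sig j k := fun k j => (congrFun (congrFun hsymm j) k)
  have hrowstar : ∀ a, Sig.mulVec (Wstar a) = fun k => (1 / 2 : ℝ) * C a k := by
    intro a
    funext k
    have h1 : (Wstar * Sig) a k = ((1 / 2 : ℝ) • C) a k := by rw [hWS]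
    have h2 : (Wstar * Sig) a k = ∑ j, Wstar a j * Sig j k := Matrix.mul_apply
    have h3 : (Sig.mulVec (Wstar a)) k = ∑ j, Sig k j * Wstar a j := rfl
    rw [h3]
    rw [Matrix.smul_apply, smul_eq_mul] at h1
    rw [h2] at h1
    rw [← h1]
    exact Finset.sum_congr rfl fun j _ => by rw [hkj k j]; ring
  -- per-row quadratic expansion
  have perrow : ∀ (a : Fin Nt) (x : (Fin Nr ⊕ Fin Nr) → ℝ),
      (x ⬝ᵥ Sig.mulVec x - C a ⬝ᵥ x) - (Wstar a ⬝ᵥ Sig.mulVec (Wstar a) - C a ⬝ᵥ Wstar a)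
        = (x - Wstar a) ⬝ᵥ Sig.mulVec (x - Wstar a) := by
    intro a x
    have e1 : (x - Wstar a) ⬝ᵥ Sig.mulVec (x - Wstar a)
        = x ⬝ᵥ Sig.mulVec x - 2 * (x ⬝ᵥ Sig.mulVec (Wstar a))
          + Wstar a ⬝ᵥ Sig.mulVec (Wstar a) := by
      rw [Matrix.mulVec_sub, dotProduct_sub, sub_dotProduct,
        sub_dotProduct, hsym (Wstar a) x]
      ring
    have e2 : C a ⬝ᵥ x = 2 * (x ⬝ᵥ Sig.mulVec (Wstar a)) := by
      rw [hrowstar a]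
      simp only [dotProduct, Finset.mul_sum]
      exact Finset.sum_congr rfl fun k _ => by ring
    have e3 : C a ⬝ᵥ Wstar a = 2 * (Wstar a ⬝ᵥ Sig.mulVec (Wstar a)) := by
      rw [hrowstar a]
      simp only [dotProduct, Finset.mul_sum]
      exact Finset.sum_congr rfl fun k _ => by ring
    rw [e1, e2, e3]
    ring
  -- master identity
  have master : ∀ (W : Matrix (Fin Nt) (Fin Nr ⊕ Fin Nr) ℝ),
      L W - L Wstar = ∑ a, ((W a - Wstar a) ⬝ᵥ Sig.mulVec (W a - Wstar a)) := by
    intro W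
    rw [canon W, canon Wstar]
    rw [← Finset.sum_congr rfl fun a _ => perrow a (W a)]
    rw [Finset.sum_sub_distrib, Finset.sum_sub_distrib, Finset.sum_sub_distrib]
    ring
  -- positivity facts
  have hnonneg : ∀ x : (Fin Nr ⊕ Fin Nr) → ℝ, 0 ≤ x ⬝ᵥ Sig.mulVec x := by
    intro x
    simpa using hposdef.posSemidef.dotProduct_mulVec_nonneg x
  have hpos : ∀ x : (Fin Nr ⊕ Fin Nr) → ℝ, x ≠ 0 → 0 < x ⬝ᵥ Sig.mulVec x := by
    intro x hx
    simpa using hposdef.dotProduct_mulVec_pos hx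
  have part1 : ∀ V, L Wstar ≤ L V := by
    intro V
    have h := master V
    have h2 : 0 ≤ ∑ a, ((V a - Wstar a) ⬝ᵥ Sig.mulVec (V a - Wstar a)) :=
      Finset.sum_nonneg fun a _ => hnonneg _
    linarith
  refine ⟨part1, ?_⟩
  intro V hmin
  have hVle : L V ≤ L Wstar := hmin Wstar
  have hEq : L V - L Wstar = 0 := le_antisymm (by linarith) (by linarith [part1 V])
  have hsum0 : ∑ a, ((V a - Wstar a) ⬝ᵥ Sig.mulVec (V a - Wstar a)) = 0 := by
    rw [← master V, hEq]
  have hzero : ∀ a : Fin Nt,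
      ((V a - Wstar a) ⬝ᵥ Sig.mulVec (V a - Wstar a)) = 0 := by
    intro a
    have := (Finset.sum_eq_zero_iff_of_nonneg (fun a _ => hnonneg (V a - Wstar a))).1 hsum0
    exact this a (Finset.mem_univ a)
  funext a
  by_contra hne
  have hd : V a - Wstar a ≠ 0 := sub_ne_zero.2 (fun h => hne h)
  exact absurd (hzero a) (ne_of_gt (hpos _ hd))
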